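/- arXiv:math/9906002 — 3 statements merged into one kernel-verified Lean document; each statement's English description precedes it below -/
import Mathlib

section
/- Let X be a subgraph of the ℤ² lattice graph with no finite connected components (in particular, any everywhere percolating subgraph of ℤ² satisfies this). Then the dual configuration X* contains no circuits; consequently, for any two dual vertices x and y there is at most one self-avoiding path in X* connecting them, and any such path has length at least |x−y|₁, the L¹-distance between x and y. -/
open MeasureTheory ProbabilityTheory

/-- Vertices of the `ℤ²` lattice. -/
abbrev V2 : Type := ℤ × ℤ

/-- `L¹` distance on `ℤ²` (also used for dual vertices, in shifted coordinates). -/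
def dist1 (x y : V2) : ℕ := (x.1 - y.1).natAbs + (x.2 - y.2).natAbs

/-- Two vertices of `ℤ²` are nearest neighbors iff their `L¹` distance is `1`. -/
def latticeAdj (x y : V2) : Prop := dist1 x y = 1

/-- The edges of the `ℤ²` lattice graph, as unordered pairs of vertices. -/
def latticeEdges : Set (Sym2 V2) := {e | ∃ x y, latticeAdj x y ∧ e = s(x, y)}

/-- The graph on `ℤ²` determined by an edge configuration `Z`:
`x` and `y` are adjacent iff they are nearest neighbors and the edge `⟨x,y⟩` belongs to `Z`. -/
def graphOf (Z : Set (Sym2 V2)) : SimpleGraph V2 where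
  Adj x y := latticeAdj x y ∧ s(x, y) ∈ Z
  symm := by
    refine ⟨fun x y h => ?_⟩
    refine ⟨?_, ?_⟩
    · have := h.1; unfold latticeAdj dist1 at *; omega
    · rw [Sym2.eq_swap]; exact h.2
  loopless := by
    refine ⟨fun x h => ?_⟩
    have := h.1; unfold latticeAdj dist1 at this; omega

/-- The connected component of `x` in the configuration `Z` is infinite. -/
def compInfinite (Z : Set (Sym2 V2)) (x : V2) : Prop :=
  {y | (graphOf Z).Reachable x y}.Infinite

/-- `X` is an everywhere percolating subgraph of `ℤ²`: it is a set of lattice edges and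
every vertex lies in an infinite connected component of `X`. -/
def EverywherePercolating (X : Set (Sym2 V2)) : Prop :=
  X ⊆ latticeEdges ∧ ∀ x : V2, compInfinite X x

/-- The dual configuration `Z*`.  A dual vertex `d` stands for the point `d + (1/2, 1/2)` of the
dual lattice `ℤ² + (1/2,1/2)`.  The dual edge joining `(a, b-1)` and `(a, b)` crosses the primal
horizontal edge from `(a, b)` to `(a+1, b)`, and the dual edge joining `(a-1, b)` and `(a, b)`
crosses the primal vertical edge from `(a, b)` to `(a, b+1)`.  A dual edge is present in `Z*`
iff the primal edge crossing it is absent from `Z`. -/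
def dualConfig (Z : Set (Sym2 V2)) : Set (Sym2 V2) :=
  {e | ∃ a b : ℤ,
    (e = s(((a, b - 1) : V2), ((a, b) : V2)) ∧ s(((a, b) : V2), ((a + 1, b) : V2)) ∉ Z) ∨
    (e = s(((a - 1, b) : V2), ((a, b) : V2)) ∧ s(((a, b) : V2), ((a, b + 1) : V2)) ∉ Z)}

/-- The box `Λ(x, m) = x + [-m/2, m/2]²`, as a set of vertices of `ℤ²`. -/
def box (x : V2) (m : ℕ) : Set V2 :=
  {y | 2 * (y.1 - x.1).natAbs ≤ m ∧ 2 * (y.2 - x.2).natAbs ≤ m}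

/-- The dual vertex `d` (representing the point `d + (1/2,1/2)`) lies in the box
`Λ(x, m) = x + [-m/2, m/2]²`. -/
def dualMemBox (x : V2) (m : ℕ) (d : V2) : Prop :=
  (2 * (d.1 - x.1) + 1).natAbs ≤ m ∧ (2 * (d.2 - x.2) + 1).natAbs ≤ m

/-- `B` is a family of independent `{0,1}`-valued random variables, indexed by the (potential)
edges of `ℤ²`, each taking the value `true` with probability `p`. -/
def BernoulliFamily {Ω : Type} [MeasurableSpace Ω] (μ : Measure Ω) (p : ℝ)
    (B : Sym2 V2 → Ω → Bool) : Prop :=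
  (∀ e, Measurable (B e)) ∧
  iIndepFun B μ ∧
  ∀ e, μ {ω | B e ω = true} = ENNReal.ofReal p

/-- The configuration obtained from `X` by `ε`-Bernoulli addition, in the sample point `ω`:
an edge of `ℤ²` is present iff it is in `X` or the corresponding Bernoulli variable is `true`. -/
def addConfig {Ω : Type} (X : Set (Sym2 V2)) (B : Sym2 V2 → Ω → Bool) (ω : Ω) :
    Set (Sym2 V2) :=
  X ∪ {e ∈ latticeEdges | B e ω = true}

/-- The vertex `n • x` of `ℤ²`. -/
def scale (n : ℕ) (x : V2) : V2 := ((n : ℤ) * x.1, (n : ℤ) * x.2)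

/-- `nx` and `ny` are closely connected in the configuration `Z`: there is a path in `Z` from
`nx` to `ny` inside `Λ(nx, n) ∪ Λ(ny, n)`. -/
def CloselyConnected (Z : Set (Sym2 V2)) (n : ℕ) (x y : V2) : Prop :=
  ∃ w : (graphOf Z).Walk (scale n x) (scale n y),
    ∀ v ∈ w.support, v ∈ box (scale n x) n ∪ box (scale n y) n

/-- The renormalized configuration `Z̃ₙ`: the edge `⟨x,y⟩` of `ℤ²` is present iff `nx` and `ny`
are closely connected in `Z`. -/
def renorm (Z : Set (Sym2 V2)) (n : ℕ) : Set (Sym2 V2) :=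
  {e | ∃ x y : V2, latticeAdj x y ∧ e = s(x, y) ∧ CloselyConnected Z n x y}

def chi (d d' v : V2) : ZMod 2 :=
  if d.1 = d'.1 ∧ v.1 ≤ d.1 ∧ ((d.2 = v.2 - 1 ∧ d'.2 = v.2) ∨ (d'.2 = v.2 - 1 ∧ d.2 = v.2)) then 1 else 0
def gfun (p q : ℤ) (d : V2) : ZMod 2 := if d.2 = q ∧ p ≤ d.1 then 1 else 0
def hfun (q : ℤ) (d : V2) : ZMod 2 := if q ≤ d.2 then 1 else 0

def wcross {Z : Set (Sym2 V2)} : {a b : V2} → (graphOf Z).Walk a b → V2 → ZMod 2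
  | _, _, SimpleGraph.Walk.nil, _ => 0
  | a, _, SimpleGraph.Walk.cons (v := d) _ w, v => chi a d v + wcross w v

lemma wcross_nil {Z : Set (Sym2 V2)} {a : V2} (v : V2) :
    wcross (SimpleGraph.Walk.nil : (graphOf Z).Walk a a) v = 0 := rfl
lemma wcross_cons {Z : Set (Sym2 V2)} {a d b : V2} (h : (graphOf Z).Adj a d)
    (w : (graphOf Z).Walk d b) (v : V2) :
    wcross (SimpleGraph.Walk.cons h w) v = chi a d v + wcross w v := rfl

lemma zmod2_addself (a : ZMod 2) : a + a = 0 := by revert a; decide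
lemma zmod2_pair (a b : ZMod 2) (h : a + b = 1) : a = 1 ∨ b = 1 := by revert a b; decide
lemma zmod2_eq (a b : ZMod 2) (h : a + b = 0) : a = b := by revert a b; decide

set_option maxHeartbeats 1000000 in
lemma edgeE (d d' : V2) (p q : ℤ) :
    chi d d' (p, q) + chi d d' (p + 1, q)
      = if s(d, d') = s(((p, q - 1) : V2), ((p, q) : V2)) then 1 else 0 := by
  simp only [chi, Sym2.eq_iff, Prod.ext_iff]
  split_ifs <;> first | decide | (exfalso; omega)

set_option maxHeartbeats 4000000 in
lemma edgeN (d d' : V2) (hadj : latticeAdj d d') (p q : ℤ) :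
    chi d d' (p, q) + chi d d' (p, q + 1)
      + (if s(d, d') = s(((p - 1, q) : V2), ((p, q) : V2)) then 1 else 0)
      = gfun p q d + gfun p q d' := by
  unfold latticeAdj dist1 at hadj
  simp only [chi, gfun, Sym2.eq_iff, Prod.ext_iff]
  split_ifs <;> first | decide | (exfalso; omega)

set_option maxHeartbeats 1000000 in
lemma edgeLow (d d' : V2) (hadj : latticeAdj d d') (p q : ℤ) (h1 : p ≤ d.1) (h2 : p ≤ d'.1) :
    chi d d' (p, q) = hfun q d + hfun q d' := by
  unfold latticeAdj dist1 at hadj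
  simp only [chi, hfun]
  split_ifs <;> first | decide | (exfalso; omega)

lemma wcross_pair_E {X : Set (Sym2 V2)} (p q : ℤ) {u u' : V2}
    (w : (graphOf (dualConfig X)).Walk u u') :
    wcross w (p, q) + wcross w (p + 1, q)
      = ((w.edges.count s(((p, q - 1) : V2), ((p, q) : V2)) : ℕ) : ZMod 2) := by
  induction w with
  | nil => simp [wcross_nil]
  | @cons a d b h w ih =>
    rw [wcross_cons, wcross_cons, SimpleGraph.Walk.edges_cons, List.count_cons]
    simp only [beq_iff_eq, Nat.cast_add, apply_ite (fun n : ℕ => (n : ZMod 2)),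
      Nat.cast_one, Nat.cast_zero]
    have he := edgeE a d p q
    linear_combination he + ih

lemma wcross_pair_N {X : Set (Sym2 V2)} (p q : ℤ) {u u' : V2}
    (w : (graphOf (dualConfig X)).Walk u u') :
    wcross w (p, q) + wcross w (p, q + 1)
      = gfun p q u + gfun p q u'
        + ((w.edges.count s(((p - 1, q) : V2), ((p, q) : V2)) : ℕ) : ZMod 2) := by
  induction w with
  | nil => simp [wcross_nil, zmod2_addself]
  | @cons a d b h w ih =>
    rw [wcross_cons, wcross_cons, SimpleGraph.Walk.edges_cons, List.count_cons]
    simp only [beq_iff_eq, Nat.cast_add, apply_ite (fun n : ℕ => (n : ZMod 2)),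
      Nat.cast_one, Nat.cast_zero]
    have he := edgeN a d h.1 p q
    have hg := zmod2_addself (gfun p q d)
    have hif := zmod2_addself (if s(a, d) = s(((p - 1, q) : V2), ((p, q) : V2)) then (1 : ZMod 2) else 0)
    linear_combination he + ih + hg - hif

lemma wcross_low {X : Set (Sym2 V2)} (p q : ℤ) {u u' : V2}
    (w : (graphOf (dualConfig X)).Walk u u')
    (hs : ∀ d ∈ w.support, p ≤ d.1) :
    wcross w (p, q) = hfun q u + hfun q u' := by
  induction w with
  | nil => simp [wcross_nil, zmod2_addself]
  | @cons a d b h w ih =>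
    rw [wcross_cons]
    have h1 : p ≤ a.1 := hs a (by simp)
    have h2 : p ≤ d.1 := hs d (by simp [SimpleGraph.Walk.start_mem_support])
    have ih' := ih (fun x hx => hs x (by simp [hx]))
    have he := edgeLow a d h.1 p q h1 h2
    have hh := zmod2_addself (hfun q d)
    linear_combination he + ih' + hh

lemma wcross_zero_high {X : Set (Sym2 V2)} (v : V2) {u u' : V2}
    (w : (graphOf (dualConfig X)).Walk u u')
    (hs : ∀ d ∈ w.support, d.1 < v.1) :
    wcross w v = 0 := by
  induction w with
  | nil => rfl
  | @cons a d b h w ih =>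
    rw [wcross_cons]
    have h1 : a.1 < v.1 := hs a (by simp)
    have : chi a d v = 0 := by unfold chi; split_ifs with hc; · exfalso; omega
                               · rfl
    rw [this, ih (fun x hx => hs x (by simp [hx])), add_zero]

lemma wcross_zero_row {X : Set (Sym2 V2)} (v : V2) {u u' : V2}
    (w : (graphOf (dualConfig X)).Walk u u')
    (hs : ∀ d ∈ w.support, d.2 ≠ v.2) :
    wcross w v = 0 := by
  induction w with
  | nil => rfl
  | @cons a d b h w ih =>
    rw [wcross_cons]
    have h1 : a.2 ≠ v.2 := hs a (by simp)
    have h2 : d.2 ≠ v.2 := hs d (by simp [SimpleGraph.Walk.start_mem_support])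
    have : chi a d v = 0 := by unfold chi; split_ifs with hc; · exfalso; omega
                               · rfl
    rw [this, ih (fun x hx => hs x (by simp [hx])), add_zero]
lemma edge_mem_dual {X : Set (Sym2 V2)} {e : Sym2 V2}
    (h : e ∈ (graphOf (dualConfig X)).edgeSet) : e ∈ dualConfig X := by
  revert h
  induction e using Sym2.ind with
  | _ x y => exact fun h => h.2

lemma notmem_E {X : Set (Sym2 V2)} (p q : ℤ)
    (hpe : s(((p, q) : V2), ((p + 1, q) : V2)) ∈ X) :
    s(((p, q - 1) : V2), ((p, q) : V2)) ∉ dualConfig X := by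
  rintro ⟨a, b, (⟨he, hn⟩ | ⟨he, hn⟩)⟩
  · simp only [Sym2.eq_iff, Prod.ext_iff] at he
    obtain ⟨ha, hb⟩ : a = p ∧ b = q := by omega
    subst ha; subst hb; exact hn hpe
  · simp only [Sym2.eq_iff, Prod.ext_iff] at he
    omega

lemma notmem_N {X : Set (Sym2 V2)} (p q : ℤ)
    (hpe : s(((p, q) : V2), ((p, q + 1) : V2)) ∈ X) :
    s(((p - 1, q) : V2), ((p, q) : V2)) ∉ dualConfig X := by
  rintro ⟨a, b, (⟨he, hn⟩ | ⟨he, hn⟩)⟩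
  · simp only [Sym2.eq_iff, Prod.ext_iff] at he
    omega
  · simp only [Sym2.eq_iff, Prod.ext_iff] at he
    obtain ⟨ha, hb⟩ : a = p ∧ b = q := by omega
    subst ha; subst hb; exact hn hpe

lemma count_zero {X : Set (Sym2 V2)} {u u' : V2} (w : (graphOf (dualConfig X)).Walk u u')
    {e : Sym2 V2} (he : e ∉ dualConfig X) : w.edges.count e = 0 :=
  List.count_eq_zero.mpr fun hm => he (edge_mem_dual (w.edges_subset_edgeSet hm))

lemma wcross_E_inv {X : Set (Sym2 V2)} (p q : ℤ)
    (hpe : s(((p, q) : V2), ((p + 1, q) : V2)) ∈ X) {u u' : V2}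
    (w : (graphOf (dualConfig X)).Walk u u') :
    wcross w (p, q) = wcross w (p + 1, q) := by
  have h := wcross_pair_E (X := X) p q w
  rw [count_zero w (notmem_E p q hpe)] at h
  exact zmod2_eq _ _ (by simpa using h)

lemma wcross_N_inv {X : Set (Sym2 V2)} (p q : ℤ)
    (hpe : s(((p, q) : V2), ((p, q + 1) : V2)) ∈ X) {u : V2}
    (w : (graphOf (dualConfig X)).Walk u u) :
    wcross w (p, q) = wcross w (p, q + 1) := by
  have h := wcross_pair_N (X := X) p q w
  rw [count_zero w (notmem_N p q hpe)] at h
  simp only [Nat.cast_zero, add_zero] at h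
  rw [zmod2_addself (gfun p q u)] at h
  exact zmod2_eq _ _ (by simpa using h)

lemma wcross_adj {X : Set (Sym2 V2)} {x y : V2} (hadj : latticeAdj x y)
    (hmem : s(x, y) ∈ X) {u : V2} (w : (graphOf (dualConfig X)).Walk u u) :
    wcross w x = wcross w y := by
  obtain ⟨x1, x2⟩ := x
  obtain ⟨y1, y2⟩ := y
  unfold latticeAdj dist1 at hadj
  simp only at hadj
  have hc : (y1 = x1 + 1 ∧ y2 = x2) ∨ (x1 = y1 + 1 ∧ x2 = y2) ∨
      (y1 = x1 ∧ y2 = x2 + 1) ∨ (x1 = y1 ∧ x2 = y2 + 1) := by omega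
  rcases hc with ⟨rfl, rfl⟩ | ⟨rfl, rfl⟩ | ⟨rfl, rfl⟩ | ⟨rfl, rfl⟩
  · exact wcross_E_inv x1 y2 hmem w
  · rw [Sym2.eq_swap] at hmem
    exact (wcross_E_inv y1 x2 hmem w).symm
  · exact wcross_N_inv y1 x2 hmem w
  · rw [Sym2.eq_swap] at hmem
    exact (wcross_N_inv x1 y2 hmem w).symm

lemma wcross_reach {X : Set (Sym2 V2)} {x y : V2} (h : (graphOf X).Reachable x y)
    {u : V2} (w : (graphOf (dualConfig X)).Walk u u) :
    wcross w x = wcross w y := by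
  obtain ⟨pw⟩ := h
  induction pw with
  | nil => rfl
  | cons ha pw ih => exact (wcross_adj ha.1 ha.2 w).trans ih
lemma walk_length_ge {Z : Set (Sym2 V2)} {x y : V2} (w : (graphOf Z).Walk x y) :
    dist1 x y ≤ w.length := by
  induction w with
  | nil => unfold dist1; simp
  | @cons a c b h w ih =>
    have h1 := h.1
    unfold latticeAdj at h1
    rw [SimpleGraph.Walk.length_cons]
    unfold dist1 at *
    omega


/-- If `X` is a subgraph of `ℤ²` with no finite connected components (in
particular, this holds for every everywhere percolating subgraph), then the dual configuration
`X*` contains no circuits; consequently, between any two dual vertices there is at most one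
self-avoiding path in `X*`, and every such path has length at least the `L¹`-distance between
its endpoints. -/
theorem no_circuits_in_dual (X : Set (Sym2 V2)) (hX : X ⊆ latticeEdges)
    (hcomp : ∀ x : V2, {y | (graphOf X).Reachable x y}.Infinite) :
    (graphOf (dualConfig X)).IsAcyclic ∧
    (∀ x y : V2, ∀ p q : (graphOf (dualConfig X)).Path x y, p = q) ∧
    (∀ x y : V2, ∀ p : (graphOf (dualConfig X)).Path x y, dist1 x y ≤ p.1.length) := by
  have hacyc : (graphOf (dualConfig X)).IsAcyclic := by
    intro u C hC
    obtain ⟨v0, hv0⟩ : ∃ v0 : V2, wcross C v0 = 1 := by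
      cases C with
      | nil => exact absurd rfl hC.ne_nil
      | @cons _ d _ h rest =>
        have hmem : s(u, d) ∈ dualConfig X :=
          edge_mem_dual ((SimpleGraph.Walk.cons h rest).edges_subset_edgeSet (by simp))
        obtain ⟨a, b, hcase | hcase⟩ := hmem
        · have hcnt : (SimpleGraph.Walk.cons h rest).edges.count
              s(((a, b - 1) : V2), ((a, b) : V2)) = 1 :=
            List.count_eq_one_of_mem hC.edges_nodup (by rw [← hcase.1]; simp)
          have hp := wcross_pair_E (X := X) a b (SimpleGraph.Walk.cons h rest)
          rw [hcnt] at hp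
          rcases zmod2_pair _ _ (by simpa using hp) with h1 | h1
          exacts [⟨_, h1⟩, ⟨_, h1⟩]
        · have hcnt : (SimpleGraph.Walk.cons h rest).edges.count
              s(((a - 1, b) : V2), ((a, b) : V2)) = 1 :=
            List.count_eq_one_of_mem hC.edges_nodup (by rw [← hcase.1]; simp)
          have hp := wcross_pair_N (X := X) a b (SimpleGraph.Walk.cons h rest)
          rw [hcnt, zmod2_addself] at hp
          rcases zmod2_pair _ _ (by simpa using hp) with h1 | h1
          exacts [⟨_, h1⟩, ⟨_, h1⟩]
    set S : ℤ := (C.support.map (fun d : V2 => |d.1| + |d.2|)).sum with hS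
    have hbound : ∀ d ∈ C.support, -S ≤ d.1 ∧ d.1 ≤ S ∧ -S ≤ d.2 ∧ d.2 ≤ S := by
      intro d hd
      have h1 : |d.1| + |d.2| ≤ S := by
        apply List.single_le_sum
        · intro x hx
          obtain ⟨y, _, rfl⟩ := List.mem_map.mp hx
          positivity
        · exact List.mem_map_of_mem hd
      have h2 := abs_nonneg d.1
      have h3 := abs_nonneg d.2
      have h4 := le_abs_self d.1
      have h5 := neg_abs_le d.1
      have h6 := le_abs_self d.2
      have h7 := neg_abs_le d.2
      omega
    have hfin : {w : V2 | -S ≤ w.1 ∧ w.1 ≤ S ∧ -S ≤ w.2 ∧ w.2 ≤ S}.Finite := by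
      apply Set.Finite.subset ((Set.finite_Icc (-S) S).prod (Set.finite_Icc (-S) S))
      rintro ⟨w1, w2⟩ ⟨h1, h2, h3, h4⟩
      exact ⟨Set.mem_Icc.mpr ⟨h1, h2⟩, Set.mem_Icc.mpr ⟨h3, h4⟩⟩
    obtain ⟨wv, hwreach, hwout⟩ := Set.not_subset.mp
      (fun hsub => (hcomp v0) (hfin.subset hsub))
    have hone : wcross C wv = 1 := (wcross_reach hwreach C).symm.trans hv0
    have hzero : wcross C wv = 0 := by
      have hcases : S < wv.1 ∨ wv.1 < -S ∨ S < wv.2 ∨ wv.2 < -S := by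
        by_contra hcon
        push_neg at hcon
        exact hwout ⟨by omega, by omega, by omega, by omega⟩
      rcases hcases with hcs | hcs | hcs | hcs
      · exact wcross_zero_high wv C (fun d hd => by have := hbound d hd; omega)
      · have hlow := wcross_low (X := X) wv.1 wv.2 C
          (fun d hd => by have := hbound d hd; omega)
        rw [Prod.mk.eta] at hlow
        rw [hlow, zmod2_addself]
      · exact wcross_zero_row wv C (fun d hd => by have := hbound d hd; omega)
      · exact wcross_zero_row wv C (fun d hd => by have := hbound d hd; omega)
    rw [hone] at hzero
    exact absurd hzero (by decide)
  exact ⟨hacyc, fun x y p q => SimpleGraph.isAcyclic_iff_path_unique.mp hacyc p q,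
    fun x y p => walk_length_ge p.1⟩
end

section
/- Let Z be a subgraph of the ℤ² lattice graph such that the dual configuration Z* contains no circuits and every connected component of Z* is finite (i.e., Z* is a forest of finite trees). Then Z is a connected subgraph of ℤ². -/
open MeasureTheory ProbabilityTheory

/-! ### Auxiliary machinery for the proof -/

/-- `u` and `v` lie on opposite sides of the set `C`. -/
def xorMem (C : Set V2) (u v : V2) : Prop := (u ∈ C ∧ v ∉ C) ∨ (u ∉ C ∧ v ∈ C)

/-- Dual edges crossing the edge boundary of `C`. -/
def dualBnd (C : Set V2) : Set (Sym2 V2) :=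
  {e | ∃ a b : ℤ,
    (e = s(((a, b - 1) : V2), ((a, b) : V2)) ∧ xorMem C (a, b) (a + 1, b)) ∨
    (e = s(((a - 1, b) : V2), ((a, b) : V2)) ∧ xorMem C (a, b) (a, b + 1))}

lemma hadj_down {C : Set V2} (α β : ℤ) (h : xorMem C (α, β) (α + 1, β)) :
    (graphOf (dualBnd C)).Adj (α, β) (α, β - 1) := by
  refine ⟨by simp [latticeAdj, dist1], ⟨α, β, Or.inl ⟨?_, h⟩⟩⟩
  exact Sym2.eq_swap

lemma hadj_up {C : Set V2} (α β : ℤ) (h : xorMem C (α, β + 1) (α + 1, β + 1)) :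
    (graphOf (dualBnd C)).Adj (α, β) (α, β + 1) := by
  refine ⟨by simp [latticeAdj, dist1], ⟨α, β + 1, Or.inl ⟨?_, h⟩⟩⟩
  norm_num

lemma hadj_left {C : Set V2} (α β : ℤ) (h : xorMem C (α, β) (α, β + 1)) :
    (graphOf (dualBnd C)).Adj (α, β) (α - 1, β) := by
  refine ⟨by simp [latticeAdj, dist1], ⟨α, β, Or.inr ⟨?_, h⟩⟩⟩
  exact Sym2.eq_swap

lemma hadj_right {C : Set V2} (α β : ℤ) (h : xorMem C (α + 1, β) (α + 1, β + 1)) :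
    (graphOf (dualBnd C)).Adj (α, β) (α + 1, β) := by
  refine ⟨by simp [latticeAdj, dist1], ⟨α + 1, β, Or.inr ⟨?_, h⟩⟩⟩
  norm_num

lemma H_edge_side {C : Set V2} {d d' : V2} (h : (graphOf (dualBnd C)).Adj d d') :
    ∃ α β : ℤ, d = (α, β) ∧
      ((d' = (α, β - 1) ∧ xorMem C (α, β) (α + 1, β)) ∨
       (d' = (α, β + 1) ∧ xorMem C (α, β + 1) (α + 1, β + 1)) ∨
       (d' = (α - 1, β) ∧ xorMem C (α, β) (α, β + 1)) ∨
       (d' = (α + 1, β) ∧ xorMem C (α + 1, β) (α + 1, β + 1))) := by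
  obtain ⟨-, a, b, hc⟩ := h
  rcases hc with ⟨he, hx⟩ | ⟨he, hx⟩ <;> rw [Sym2.eq_iff] at he <;>
    rcases he with ⟨hd, hd'⟩ | ⟨hd, hd'⟩
  · -- d = (a, b-1), d' = (a, b): "up" edge out of d
    refine ⟨a, b - 1, hd, Or.inr (Or.inl ⟨?_, ?_⟩)⟩
    · rw [show b - 1 + 1 = b from by ring]; exact hd'
    · rw [show b - 1 + 1 = b from by ring]; exact hx
  · -- d = (a, b), d' = (a, b-1): "down" edge out of d
    exact ⟨a, b, hd, Or.inl ⟨hd', hx⟩⟩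
  · -- d = (a-1, b), d' = (a, b): "right" edge out of d
    refine ⟨a - 1, b, hd, Or.inr (Or.inr (Or.inr ⟨?_, ?_⟩))⟩
    · rw [show a - 1 + 1 = a from by ring]; exact hd'
    · rw [show a - 1 + 1 = a from by ring]; exact hx
  · -- d = (a, b), d' = (a-1, b): "left" edge out of d
    exact ⟨a, b, hd, Or.inr (Or.inr (Or.inl ⟨hd', hx⟩))⟩

/-- Parity: every vertex incident to a boundary-dual edge has a second such edge. -/
lemma parity {C : Set V2} {d d' : V2} (h : (graphOf (dualBnd C)).Adj d d') :
    ∃ d'', (graphOf (dualBnd C)).Adj d d'' ∧ d'' ≠ d' := by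
  obtain ⟨α, β, rfl, hc⟩ := H_edge_side h
  rcases hc with ⟨rfl, hx⟩ | ⟨rfl, hx⟩ | ⟨rfl, hx⟩ | ⟨rfl, hx⟩
  · have h3 : xorMem C (α, β + 1) (α + 1, β + 1) ∨ xorMem C (α, β) (α, β + 1) ∨
        xorMem C (α + 1, β) (α + 1, β + 1) := by
      unfold xorMem at hx ⊢; tauto
    rcases h3 with h3 | h3 | h3
    · exact ⟨_, hadj_up α β h3, by simp only [ne_eq, Prod.mk.injEq]; omega⟩
    · exact ⟨_, hadj_left α β h3, by simp only [ne_eq, Prod.mk.injEq]; omega⟩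
    · exact ⟨_, hadj_right α β h3, by simp only [ne_eq, Prod.mk.injEq]; omega⟩
  · have h3 : xorMem C (α, β) (α + 1, β) ∨ xorMem C (α, β) (α, β + 1) ∨
        xorMem C (α + 1, β) (α + 1, β + 1) := by
      unfold xorMem at hx ⊢; tauto
    rcases h3 with h3 | h3 | h3
    · exact ⟨_, hadj_down α β h3, by simp only [ne_eq, Prod.mk.injEq]; omega⟩
    · exact ⟨_, hadj_left α β h3, by simp only [ne_eq, Prod.mk.injEq]; omega⟩
    · exact ⟨_, hadj_right α β h3, by simp only [ne_eq, Prod.mk.injEq]; omega⟩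
  · have h3 : xorMem C (α, β) (α + 1, β) ∨ xorMem C (α, β + 1) (α + 1, β + 1) ∨
        xorMem C (α + 1, β) (α + 1, β + 1) := by
      unfold xorMem at hx ⊢; tauto
    rcases h3 with h3 | h3 | h3
    · exact ⟨_, hadj_down α β h3, by simp only [ne_eq, Prod.mk.injEq]; omega⟩
    · exact ⟨_, hadj_up α β h3, by simp only [ne_eq, Prod.mk.injEq]; omega⟩
    · exact ⟨_, hadj_right α β h3, by simp only [ne_eq, Prod.mk.injEq]; omega⟩
  · have h3 : xorMem C (α, β) (α + 1, β) ∨ xorMem C (α, β + 1) (α + 1, β + 1) ∨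
        xorMem C (α, β) (α, β + 1) := by
      unfold xorMem at hx ⊢; tauto
    rcases h3 with h3 | h3 | h3
    · exact ⟨_, hadj_down α β h3, by simp only [ne_eq, Prod.mk.injEq]; omega⟩
    · exact ⟨_, hadj_up α β h3, by simp only [ne_eq, Prod.mk.injEq]; omega⟩
    · exact ⟨_, hadj_left α β h3, by simp only [ne_eq, Prod.mk.injEq]; omega⟩

lemma getVert_concat_length {V : Type} {G : SimpleGraph V} {u v w : V}
    (p : G.Walk u v) (h : G.Adj v w) : (p.concat h).getVert p.length = v := by
  induction p with
  | nil => rfl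
  | cons a p ih =>
    rw [SimpleGraph.Walk.concat_cons]
    simp only [SimpleGraph.Walk.length_cons, SimpleGraph.Walk.getVert_cons_succ]
    exact ih _

/-- In a forest, a vertex cannot have two distinct neighbors both at distance
`≤ dist d1 v` from a reference vertex `d1` (in its component). -/
lemma forest_aux {G : SimpleGraph V2} (hac : G.IsAcyclic) {d1 v w1 w2 : V2}
    (h1 : G.Adj v w1) (h2 : G.Adj v w2) (hne : w1 ≠ w2)
    (hr1 : G.Reachable d1 w1) (hr2 : G.Reachable d1 w2)
    (hL1 : G.dist d1 w1 ≤ G.dist d1 v) (hL2 : G.dist d1 w2 ≤ G.dist d1 v) : False := by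
  classical
  obtain ⟨p1, hp1, hl1⟩ := hr1.exists_path_of_dist
  obtain ⟨p2, hp2, hl2⟩ := hr2.exists_path_of_dist
  have hv1 : v ∉ p1.support := by
    intro hs
    have ht1 := SimpleGraph.dist_le (p1.takeUntil v hs)
    have ht2 := SimpleGraph.Walk.length_takeUntil_le p1 hs
    have hlen : (p1.takeUntil v hs).length + (p1.dropUntil v hs).length = p1.length := by
      rw [← SimpleGraph.Walk.length_append, SimpleGraph.Walk.take_spec p1 hs]
    have h0 : (p1.dropUntil v hs).length = 0 := by omega
    exact h1.ne (SimpleGraph.Walk.eq_of_length_eq_zero h0)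
  have hv2 : v ∉ p2.support := by
    intro hs
    have ht1 := SimpleGraph.dist_le (p2.takeUntil v hs)
    have ht2 := SimpleGraph.Walk.length_takeUntil_le p2 hs
    have hlen : (p2.takeUntil v hs).length + (p2.dropUntil v hs).length = p2.length := by
      rw [← SimpleGraph.Walk.length_append, SimpleGraph.Walk.take_spec p2 hs]
    have h0 : (p2.dropUntil v hs).length = 0 := by omega
    exact h2.ne (SimpleGraph.Walk.eq_of_length_eq_zero h0)
  have hP1 : (p1.concat h1.symm).IsPath := by
    rw [← SimpleGraph.Walk.isPath_reverse_iff, SimpleGraph.Walk.reverse_concat]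
    exact SimpleGraph.Walk.IsPath.cons hp1.reverse
      (by rw [SimpleGraph.Walk.support_reverse, List.mem_reverse]; exact hv1)
  have hP2 : (p2.concat h2.symm).IsPath := by
    rw [← SimpleGraph.Walk.isPath_reverse_iff, SimpleGraph.Walk.reverse_concat]
    exact SimpleGraph.Walk.IsPath.cons hp2.reverse
      (by rw [SimpleGraph.Walk.support_reverse, List.mem_reverse]; exact hv2)
  have hpaths := SimpleGraph.isAcyclic_iff_path_unique.mp hac
    ⟨p1.concat h1.symm, hP1⟩ ⟨p2.concat h2.symm, hP2⟩
  have hwalk : p1.concat h1.symm = p2.concat h2.symm := congrArg Subtype.val hpaths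
  have hlen : p1.length = p2.length := by
    have := congrArg SimpleGraph.Walk.length hwalk
    simpa [SimpleGraph.Walk.length_concat] using this
  have e1 : (p1.concat h1.symm).getVert p1.length = w1 := getVert_concat_length _ _
  have e2 : (p2.concat h2.symm).getVert p2.length = w2 := getVert_concat_length _ _
  apply hne
  rw [← e1, ← e2, hwalk, hlen]

/-- A nonempty subset of `ℤ²` closed under lattice steps is everything. -/
lemma lattice_reach (C' : Set V2)
    (hstep : ∀ u v : V2, latticeAdj u v → u ∈ C' → v ∈ C')
    {u : V2} (hu : u ∈ C') (v : V2) : v ∈ C' := by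
  have hstep' : ∀ p q : ℤ, (p, q) ∈ C' →
      ((p + 1, q) ∈ C' ∧ (p - 1, q) ∈ C' ∧ (p, q + 1) ∈ C' ∧ (p, q - 1) ∈ C') := by
    intro p q hpq
    exact ⟨hstep _ _ (by simp [latticeAdj, dist1]) hpq,
      hstep _ _ (by simp [latticeAdj, dist1]) hpq,
      hstep _ _ (by simp [latticeAdj, dist1]) hpq,
      hstep _ _ (by simp [latticeAdj, dist1]) hpq⟩
  have horiz : ∀ (k : ℤ) (p q : ℤ), (p, q) ∈ C' → (p + k, q) ∈ C' := by
    intro k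
    induction k using Int.induction_on with
    | zero => intro p q h; simpa using h
    | succ i ih =>
      intro p q h
      have h2 := (hstep' _ _ (ih p q h)).1
      convert h2 using 2
      ring
    | pred i ih =>
      intro p q h
      have h2 := (hstep' _ _ (ih p q h)).2.1
      convert h2 using 2
      ring
  have hvert : ∀ (k : ℤ) (p q : ℤ), (p, q) ∈ C' → (p, q + k) ∈ C' := by
    intro k
    induction k using Int.induction_on with
    | zero => intro p q h; simpa using h
    | succ i ih =>
      intro p q h
      have h2 := (hstep' _ _ (ih p q h)).2.2.1
      convert h2 using 2
      ring
    | pred i ih =>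
      intro p q h
      have h2 := (hstep' _ _ (ih p q h)).2.2.2
      convert h2 using 2
      ring
  obtain ⟨u1, u2⟩ := u
  obtain ⟨v1, v2⟩ := v
  have h1 : (u1 + (v1 - u1), u2) ∈ C' := horiz _ _ _ hu
  rw [show u1 + (v1 - u1) = v1 from by ring] at h1
  have h2 : (v1, u2 + (v2 - u2)) ∈ C' := hvert _ _ _ h1
  rwa [show u2 + (v2 - u2) = v2 from by ring] at h2


/-- If the dual configuration `Z*` of a subgraph `Z` of `ℤ²` contains no
circuits and all its connected components are finite (i.e. `Z*` is a forest of finite trees),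
then `Z` is a connected subgraph of `ℤ²`. -/
theorem connected_of_dual_forest_of_finite_trees (Z : Set (Sym2 V2)) (hZ : Z ⊆ latticeEdges)
    (hacyclic : (graphOf (dualConfig Z)).IsAcyclic)
    (hfin : ∀ d : V2, {d' | (graphOf (dualConfig Z)).Reachable d d'}.Finite) :
    (graphOf Z).Connected := by
  rw [SimpleGraph.connected_iff]
  refine ⟨?_, ⟨(0, 0)⟩⟩
  intro x y
  by_contra hxy
  classical
  set C : Set V2 := {v | (graphOf Z).Reachable x v} with hCdef
  have hxC : x ∈ C := SimpleGraph.Reachable.refl x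
  have hyC : y ∉ C := hxy
  have hCclosed : ∀ u v : V2, latticeAdj u v → s(u, v) ∈ Z → (u ∈ C ↔ v ∈ C) := by
    intro u v ha hz
    have hadj : (graphOf Z).Adj u v := ⟨ha, hz⟩
    exact ⟨fun h => h.trans hadj.reachable, fun h => h.trans hadj.symm.reachable⟩
  have hsub : dualBnd C ⊆ dualConfig Z := by
    rintro e ⟨a, b, ⟨he, hx'⟩ | ⟨he, hx'⟩⟩
    · refine ⟨a, b, Or.inl ⟨he, fun hz => ?_⟩⟩
      have := hCclosed (a, b) (a + 1, b) (by simp [latticeAdj, dist1]) hz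
      unfold xorMem at hx'; tauto
    · refine ⟨a, b, Or.inr ⟨he, fun hz => ?_⟩⟩
      have := hCclosed (a, b) (a, b + 1) (by simp [latticeAdj, dist1]) hz
      unfold xorMem at hx'; tauto
  have hle : graphOf (dualBnd C) ≤ graphOf (dualConfig Z) := by
    intro d d' h
    exact ⟨h.1, hsub h.2⟩
  -- there is a boundary edge
  have hbnd : ∃ u v : V2, latticeAdj u v ∧ u ∈ C ∧ v ∉ C := by
    by_contra hno
    push_neg at hno
    exact hyC (lattice_reach C hno hxC y)
  obtain ⟨u, v, huv, huC, hvC⟩ := hbnd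
  -- there is an edge in the boundary-dual graph
  have hinit : ∃ d1 d2 : V2, (graphOf (dualBnd C)).Adj d1 d2 := by
    obtain ⟨u1, u2⟩ := u
    obtain ⟨v1, v2⟩ := v
    have hc : ((v1, v2) : V2) = (u1 + 1, u2) ∨ ((v1, v2) : V2) = (u1 - 1, u2) ∨
        ((v1, v2) : V2) = (u1, u2 + 1) ∨ ((v1, v2) : V2) = (u1, u2 - 1) := by
      unfold latticeAdj dist1 at huv
      simp only [Prod.mk.injEq]
      omega
    rcases hc with hc | hc | hc | hc
    · rw [hc] at hvC
      exact ⟨_, _, hadj_down u1 u2 (Or.inl ⟨huC, hvC⟩)⟩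
    · rw [hc] at hvC
      have hx' : xorMem C (u1 - 1, u2) (u1 - 1 + 1, u2) := by
        rw [show u1 - 1 + 1 = u1 from by ring]; exact Or.inr ⟨hvC, huC⟩
      exact ⟨_, _, hadj_down (u1 - 1) u2 hx'⟩
    · rw [hc] at hvC
      exact ⟨_, _, hadj_left u1 u2 (Or.inl ⟨huC, hvC⟩)⟩
    · rw [hc] at hvC
      have hx' : xorMem C (u1, u2 - 1) (u1, u2 - 1 + 1) := by
        rw [show u2 - 1 + 1 = u2 from by ring]; exact Or.inr ⟨hvC, huC⟩
      exact ⟨_, _, hadj_left u1 (u2 - 1) hx'⟩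
  obtain ⟨d1, d2, hD⟩ := hinit
  -- the H-component of d1 is finite
  have hSfin : {d : V2 | (graphOf (dualBnd C)).Reachable d1 d}.Finite :=
    (hfin d1).subset (fun d hd => SimpleGraph.Reachable.mono hle hd)
  have hSne : {d : V2 | (graphOf (dualBnd C)).Reachable d1 d}.Nonempty :=
    ⟨d1, SimpleGraph.Reachable.refl d1⟩
  obtain ⟨vm, hvmS, hmax⟩ := Set.Finite.exists_maximalFor
    (fun d => (graphOf (dualConfig Z)).dist d1 d) _ hSfin hSne
  have hmax' : ∀ d, (graphOf (dualBnd C)).Reachable d1 d →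
      (graphOf (dualConfig Z)).dist d1 d ≤ (graphOf (dualConfig Z)).dist d1 vm := by
    intro d hd
    by_contra hlt
    push_neg at hlt
    have := hmax (j := d) hd (le_of_lt hlt)
    simp only at this
    omega
  have hvmS' : (graphOf (dualBnd C)).Reachable d1 vm := hvmS
  -- vm has an incident boundary-dual edge
  have hedge : ∃ w, (graphOf (dualBnd C)).Adj vm w := by
    by_cases hvm : vm = d1
    · exact ⟨d2, hvm ▸ hD⟩
    · obtain ⟨p⟩ := hvmS'.symm
      cases p with
      | nil => exact absurd rfl hvm
      | cons h q => exact ⟨_, h⟩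
  obtain ⟨w2, hw2⟩ := hedge
  obtain ⟨w1, hw1, hne⟩ := parity hw2
  have hw1S : (graphOf (dualBnd C)).Reachable d1 w1 := hvmS'.trans hw1.reachable
  have hw2S : (graphOf (dualBnd C)).Reachable d1 w2 := hvmS'.trans hw2.reachable
  exact forest_aux hacyclic (hle hw1) (hle hw2) hne
    (SimpleGraph.Reachable.mono hle hw1S) (SimpleGraph.Reachable.mono hle hw2S)
    (hmax' _ hw1S) (hmax' _ hw2S)
end

section
/- Let X be a fixed everywhere percolating subgraph of ℤ², let ε ∈ (0,1), and let Y = Y(X,ε) be obtained from X by ε-Bernoulli addition. Then for any two dual vertices x, y ∈ ℤ²_dual, the probability that x and y are connected in the dual configuration Y* is at most (1−ε)^{|x−y|₁}, where |x−y|₁ denotes L¹-distance. -/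
open MeasureTheory ProbabilityTheory

section Aux

open scoped Classical

def vD (a b : ℤ) : Sym2 V2 := s((a, b - 1), (a, b))
def hD (a b : ℤ) : Sym2 V2 := s((a - 1, b), (a, b))
def pH (a b : ℤ) : Sym2 V2 := s((a, b), (a + 1, b))
def pV (a b : ℤ) : Sym2 V2 := s((a, b), (a, b + 1))

lemma vD_inj {a b a' b' : ℤ} : vD a b = vD a' b' ↔ a = a' ∧ b = b' := by
  unfold vD; rw [Sym2.eq_iff]; simp [Prod.ext_iff]; omega
lemma hD_inj {a b a' b' : ℤ} : hD a b = hD a' b' ↔ a = a' ∧ b = b' := by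
  unfold hD; rw [Sym2.eq_iff]; simp [Prod.ext_iff]; omega
lemma vD_ne_hD {a b a' b' : ℤ} : vD a b ≠ hD a' b' := by
  unfold vD hD; intro h; rw [Sym2.eq_iff] at h; simp [Prod.ext_iff] at h; omega
lemma pH_inj {a b a' b' : ℤ} : pH a b = pH a' b' ↔ a = a' ∧ b = b' := by
  unfold pH; rw [Sym2.eq_iff]; simp [Prod.ext_iff]; omega
lemma pV_inj {a b a' b' : ℤ} : pV a b = pV a' b' ↔ a = a' ∧ b = b' := by
  unfold pV; rw [Sym2.eq_iff]; simp [Prod.ext_iff]; omega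
lemma pH_ne_pV {a b a' b' : ℤ} : pH a b ≠ pV a' b' := by
  unfold pH pV; intro h; rw [Sym2.eq_iff] at h; simp [Prod.ext_iff] at h; omega

lemma z2 : ∀ a : ZMod 2, a + a = 0 := by decide
lemma z2' : ∀ a b : ZMod 2, a + b = 0 → a = b := by decide

def eSum (χ : V2 → ZMod 2) : Sym2 V2 → ZMod 2 :=
  Sym2.lift ⟨fun u v => χ u + χ v, fun _ _ => add_comm _ _⟩

@[simp] lemma eSum_mk (χ : V2 → ZMod 2) (u v : V2) : eSum χ s(u, v) = χ u + χ v := rfl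

lemma sum_map_add {α : Type*} (l : List α) (f g : α → ZMod 2) :
    (l.map (fun e => f e + g e)).sum = (l.map f).sum + (l.map g).sum := by
  induction l with
  | nil => simp
  | cons a l ih => simp [ih]; ring

lemma sum_map_congr {α : Type*} {l : List α} {f g : α → ZMod 2}
    (h : ∀ e ∈ l, f e = g e) : (l.map f).sum = (l.map g).sum := by
  induction l with
  | nil => simp
  | cons a l ih =>
    simp only [List.map_cons, List.sum_cons]
    rw [h a (by simp), ih (fun e he => h e (by simp [he]))]

lemma sum_map_zero {α : Type*} {l : List α} {f : α → ZMod 2}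
    (h : ∀ e ∈ l, f e = 0) : (l.map f).sum = 0 := by
  rw [sum_map_congr h]; simp

lemma key {G : SimpleGraph V2} (χ : V2 → ZMod 2) :
    ∀ {u v : V2} (w : G.Walk u v), (w.edges.map (eSum χ)).sum = χ u + χ v := by
  intro u v w
  induction w with
  | nil => exact (z2 _).symm ▸ rfl
  | @cons u z v h w ih =>
    simp only [SimpleGraph.Walk.edges_cons, List.map_cons, List.sum_cons, ih, eSum_mk]
    have h2 := z2 (χ z)
    calc χ u + χ z + (χ z + χ v) = χ u + (χ z + χ z) + χ v := by ring
    _ = χ u + χ v := by rw [h2]; ring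

def ind1 (c : Sym2 V2) (e : Sym2 V2) : ZMod 2 := if e = c then 1 else 0

lemma cnt_zero {l : List (Sym2 V2)} {c : Sym2 V2} (h : c ∉ l) :
    (l.map (ind1 c)).sum = 0 :=
  sum_map_zero (fun e he => by
    unfold ind1; rw [if_neg]; rintro rfl; exact h he)

lemma cnt_one {l : List (Sym2 V2)} {c : Sym2 V2} (hmem : c ∈ l) (hnd : l.Nodup) :
    (l.map (ind1 c)).sum = 1 := by
  induction l with
  | nil => simp at hmem
  | cons a l ih =>
    simp only [List.map_cons, List.sum_cons]
    rcases List.mem_cons.mp hmem with rfl | hc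
    · rw [cnt_zero (by exact (List.nodup_cons.mp hnd).1)]
      unfold ind1; rw [if_pos rfl]; ring
    · have ha : a ≠ c := by rintro rfl; exact (List.nodup_cons.mp hnd).1 hc
      rw [ih hc (List.nodup_cons.mp hnd).2]
      have : ind1 c a = 0 := by unfold ind1; rw [if_neg ha]
      rw [this]; ring

noncomputable def indv (p q : ℤ) (e : Sym2 V2) : ZMod 2 := if ∃ a, p ≤ a ∧ e = vD a q then 1 else 0

lemma indv_vD {p q a b : ℤ} : indv p q (vD a b) = if p ≤ a ∧ b = q then 1 else 0 := by
  unfold indv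
  by_cases h : p ≤ a ∧ b = q
  · rw [if_pos ⟨a, h.1, by rw [h.2]⟩, if_pos h]
  · rw [if_neg, if_neg h]
    rintro ⟨a', h1, h2⟩
    obtain ⟨ha, hb⟩ := vD_inj.mp h2
    exact h ⟨ha ▸ h1, hb⟩

lemma indv_hD {p q a b : ℤ} : indv p q (hD a b) = 0 := by
  unfold indv
  rw [if_neg]
  rintro ⟨a', _, h2⟩
  exact vD_ne_hD h2.symm

lemma ind1_vD_vD {p q a b : ℤ} : ind1 (vD p q) (vD a b) = if a = p ∧ b = q then 1 else 0 := by
  unfold ind1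
  by_cases h : a = p ∧ b = q
  · rw [if_pos (vD_inj.mpr h), if_pos h]
  · rw [if_neg (fun hh => h (vD_inj.mp hh)), if_neg h]

lemma ind1_vD_hD {p q a b : ℤ} : ind1 (vD p q) (hD a b) = 0 := by
  unfold ind1; rw [if_neg (fun hh => vD_ne_hD hh.symm)]

lemma ind1_hD_vD {p q a b : ℤ} : ind1 (hD p q) (vD a b) = 0 := by
  unfold ind1; rw [if_neg (fun hh => vD_ne_hD hh)]

lemma ind1_hD_hD {p q a b : ℤ} : ind1 (hD p q) (hD a b) = if a = p ∧ b = q then 1 else 0 := by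
  unfold ind1
  by_cases h : a = p ∧ b = q
  · rw [if_pos (hD_inj.mpr h), if_pos h]
  · rw [if_neg (fun hh => h (hD_inj.mp hh)), if_neg h]

noncomputable def piv (E : List (Sym2 V2)) (p q : ℤ) : ZMod 2 := (E.map (indv p q)).sum
def cnt (E : List (Sym2 V2)) (c : Sym2 V2) : ZMod 2 := (E.map (ind1 c)).sum

/-- dual-form edges -/
def DualForm (e : Sym2 V2) : Prop := (∃ a b, e = vD a b) ∨ (∃ a b, e = hD a b)

lemma piv_step_h {E : List (Sym2 V2)} (hform : ∀ e ∈ E, DualForm e) (p q : ℤ) :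
    piv E p q = piv E (p + 1) q + cnt E (vD p q) := by
  unfold piv cnt
  rw [← sum_map_add]
  apply sum_map_congr
  intro e he
  rcases hform e he with ⟨a, b, rfl⟩ | ⟨a, b, rfl⟩
  · rw [indv_vD, indv_vD, ind1_vD_vD]
    split_ifs <;> first | rfl | decide | omega
  · rw [indv_hD, indv_hD, ind1_vD_hD]
    decide

lemma piv_step_v {G : SimpleGraph V2} {u : V2} (C : G.Walk u u)
    (hform : ∀ e ∈ C.edges, DualForm e) (p q : ℤ) :
    piv C.edges p q + piv C.edges p (q + 1) + cnt C.edges (hD p q) = 0 := by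
  have hk := key (fun w => if w.2 = q ∧ p ≤ w.1 then (1 : ZMod 2) else 0) C
  rw [z2] at hk
  rw [← hk]
  unfold piv cnt
  rw [← sum_map_add, ← sum_map_add]
  apply (sum_map_congr _).symm
  intro e he
  rcases hform e he with ⟨a, b, rfl⟩ | ⟨a, b, rfl⟩
  · rw [indv_vD, indv_vD, ind1_hD_vD]
    unfold vD
    rw [eSum_mk]
    dsimp only
    split_ifs <;> first | rfl | decide | omega
  · rw [indv_hD, indv_hD, ind1_hD_hD]
    unfold hD
    rw [eSum_mk]
    dsimp only
    split_ifs <;> first | rfl | decide | omega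

lemma piv_row {G : SimpleGraph V2} {u : V2} (C : G.Walk u u)
    (hform : ∀ e ∈ C.edges, DualForm e) (q : ℤ) :
    (C.edges.map (fun e => if ∃ a, e = vD a q then (1 : ZMod 2) else 0)).sum = 0 := by
  have hk := key (fun w => if w.2 < q then (1 : ZMod 2) else 0) C
  rw [z2] at hk
  refine Eq.trans (sum_map_congr ?_) hk
  intro e he
  rcases hform e he with ⟨a, b, rfl⟩ | ⟨a, b, rfl⟩
  · have hiff : (∃ a', vD a b = vD a' q) ↔ b = q := by
      constructor
      · rintro ⟨a', h⟩; exact (vD_inj.mp h).2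
      · rintro rfl; exact ⟨a, rfl⟩
    rw [if_congr hiff rfl rfl]
    have h1 : eSum (fun w => if w.2 < q then (1 : ZMod 2) else 0) (vD a b)
        = (if b - 1 < q then (1 : ZMod 2) else 0) + (if b < q then 1 else 0) := rfl
    rw [h1]
    split_ifs <;> first | rfl | decide | omega
  · have hne : ¬(∃ a', hD a b = vD a' q) := by
      rintro ⟨a', h⟩; exact vD_ne_hD h.symm
    rw [if_neg hne]
    have h1 : eSum (fun w => if w.2 < q then (1 : ZMod 2) else 0) (hD a b)
        = (if b < q then (1 : ZMod 2) else 0) + (if b < q then 1 else 0) := rfl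
    rw [h1]
    split_ifs <;> first | rfl | decide | omega

lemma exists_bound (l : List V2) : ∃ M : ℤ, 0 ≤ M ∧ ∀ v ∈ l, -M ≤ v.1 ∧ v.1 ≤ M ∧ -M ≤ v.2 ∧ v.2 ≤ M := by
  induction l with
  | nil => exact ⟨0, le_refl _, by simp⟩
  | cons a l ih =>
    obtain ⟨M, hM0, hM⟩ := ih
    refine ⟨M + |a.1| + |a.2|, by positivity, ?_⟩
    intro v hv
    have h1 := abs_nonneg a.1
    have h2 := abs_nonneg a.2
    have h3 := le_abs_self a.1
    have h4 := neg_abs_le a.1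
    have h5 := le_abs_self a.2
    have h6 := neg_abs_le a.2
    rcases List.mem_cons.mp hv with rfl | hv
    · omega
    · have := hM v hv; omega

lemma list_max : ∀ (l : List ℤ), l ≠ [] → ∃ m ∈ l, ∀ x ∈ l, x ≤ m := by
  intro l
  induction l with
  | nil => intro h; exact absurd rfl h
  | cons a l ih =>
    intro _
    rcases Decidable.em (l = []) with rfl | hne
    · exact ⟨a, by simp, by simp⟩
    · obtain ⟨m, hm, hmax⟩ := ih hne
      rcases Decidable.em (a ≤ m) with h | h
      · exact ⟨m, by simp [hm], by
          intro x hx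
          rcases List.mem_cons.mp hx with rfl | hx
          · exact h
          · exact hmax x hx⟩
      · exact ⟨a, by simp, by
          intro x hx
          rcases List.mem_cons.mp hx with rfl | hx
          · exact le_refl _
          · exact le_of_lt (lt_of_le_of_lt (hmax x hx) (by omega))⟩

lemma exists_incident {G : SimpleGraph V2} :
    ∀ {s t : V2} (w : G.Walk s t) (v : V2), v ∈ w.support → w.edges ≠ [] →
      ∃ e ∈ w.edges, v ∈ e := by
  intro s t w
  induction w with
  | nil => intro v _ h; simp at h
  | @cons s z t h w ih =>
    intro v hv _
    rcases List.mem_cons.mp (by simpa using hv) with rfl | hv'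
    · exact ⟨s(v, z), by simp, by simp⟩
    · rcases Decidable.em (v = z) with rfl | hvz
      · exact ⟨s(s, v), by simp, by simp⟩
      · have hwne : w.edges ≠ [] := by
          intro hnil
          have : w.length = 0 := by
            have := w.length_edges; rw [hnil] at this; simpa using this.symm
          have hnilw : w.Nil := SimpleGraph.Walk.nil_iff_length_eq.mpr this
          have : w.support = [z] := by
            cases w with
            | nil => simp
            | cons h' w' => simp at this
          rw [this] at hv'
          exact hvz (by simpa using hv')
        obtain ⟨e, he, hve⟩ := ih v hv' hwne
        exact ⟨e, by simp [he], hve⟩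

lemma walk_snd_const {G : SimpleGraph V2} :
    ∀ {s t : V2} (w : G.Walk s t), (∀ e ∈ w.edges, ∃ a b, e = hD a b) →
      ∀ v ∈ w.support, v.2 = s.2 := by
  intro s t w
  induction w with
  | nil => intro _ v hv; simp at hv; rw [hv]
  | @cons s z t h w ih =>
    intro hall v hv
    have hfst : ∃ a b, s(s, z) = hD a b := hall _ (by simp)
    have hsz : z.2 = s.2 := by
      obtain ⟨a, b, hab⟩ := hfst
      unfold hD at hab
      rw [Sym2.eq_iff] at hab
      rcases hab with ⟨h1, h2⟩ | ⟨h1, h2⟩ <;> rw [h1, h2]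
    rcases List.mem_cons.mp (by simpa using hv) with rfl | hv'
    · rfl
    · rw [ih (fun e he => hall e (by simp [he])) v hv', hsz]

lemma vD_mem_dual {Z : Set (Sym2 V2)} {a b : ℤ} (h : vD a b ∈ dualConfig Z) : pH a b ∉ Z := by
  obtain ⟨a', b', hc⟩ := h
  rcases hc with ⟨h1, h2⟩ | ⟨h1, h2⟩
  · obtain ⟨rfl, rfl⟩ := vD_inj.mp h1
    exact h2
  · exact absurd h1 vD_ne_hD

lemma hD_mem_dual {Z : Set (Sym2 V2)} {a b : ℤ} (h : hD a b ∈ dualConfig Z) : pV a b ∉ Z := by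
  obtain ⟨a', b', hc⟩ := h
  rcases hc with ⟨h1, h2⟩ | ⟨h1, h2⟩
  · exact absurd h1.symm vD_ne_hD
  · obtain ⟨rfl, rfl⟩ := hD_inj.mp h1
    exact h2

lemma dual_form {Z : Set (Sym2 V2)} {e : Sym2 V2} (h : e ∈ dualConfig Z) : DualForm e := by
  obtain ⟨a, b, hc⟩ := h
  rcases hc with ⟨h1, _⟩ | ⟨h1, _⟩
  · exact Or.inl ⟨a, b, h1⟩
  · exact Or.inr ⟨a, b, h1⟩

lemma graphOf_edge_mem {Z : Set (Sym2 V2)} {e : Sym2 V2} (h : e ∈ (graphOf Z).edgeSet) : e ∈ Z := by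
  induction e using Sym2.ind with
  | _ u v => exact ((SimpleGraph.mem_edgeSet _).mp h).2

lemma dual_acyclic {X : Set (Sym2 V2)} (hX : EverywherePercolating X) :
    (graphOf (dualConfig X)).IsAcyclic := by
  intro u C hC
  have hdualE : ∀ e ∈ C.edges, e ∈ dualConfig X :=
    fun e he => graphOf_edge_mem (C.edges_subset_edgeSet he)
  have hformE : ∀ e ∈ C.edges, DualForm e := fun e he => dual_form (hdualE e he)
  obtain ⟨M, hM0, hM⟩ := exists_bound C.support
  have hnd : C.edges.Nodup := hC.edges_nodup
  by_cases hvert : ∃ a b, vD a b ∈ C.edges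
  · -- Case 1: there is a vertical dual edge
    have hMv : ∀ a b : ℤ, vD a b ∈ C.edges → -M ≤ a ∧ a ≤ M ∧ -M ≤ b ∧ b ≤ M := by
      intro a b hab
      have hmem : s(((a, b - 1) : V2), ((a, b) : V2)) ∈ C.edges := hab
      have := C.snd_mem_support_of_mem_edges hmem
      exact hM _ this
    obtain ⟨a0, ⟨b0, hab0⟩, hmax⟩ :=
      Int.exists_greatest_of_bdd (P := fun a => ∃ b, vD a b ∈ C.edges)
        ⟨M, fun z hz => (hMv z hz.choose hz.choose_spec).2.1⟩
        ⟨hvert.choose, hvert.choose_spec⟩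
    have hpiv1 : piv C.edges a0 b0 = 1 := by
      have hcongr : (C.edges.map (indv a0 b0)).sum
          = (C.edges.map (ind1 (vD a0 b0))).sum := by
        apply sum_map_congr
        intro e he
        rcases hformE e he with ⟨a, b, rfl⟩ | ⟨a, b, rfl⟩
        · rw [indv_vD, ind1_vD_vD]
          have hle : a ≤ a0 := hmax a ⟨b, he⟩
          split_ifs <;> first | rfl | omega
        · rw [indv_hD, ind1_vD_hD]
      unfold piv
      rw [hcongr]
      exact cnt_one hab0 hnd
    have hfar : ∀ p q : ℤ, (M < p ∨ M < q ∨ q < -M ∨ p < -M) → piv C.edges p q = 0 := by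
      intro p q hpq
      rcases hpq with h | h | h | h
      · refine sum_map_zero ?_
        intro e he
        rcases hformE e he with ⟨a, b, rfl⟩ | ⟨a, b, rfl⟩
        · rw [indv_vD]; have := hMv a b he; rw [if_neg (by omega)]
        · exact indv_hD
      · refine sum_map_zero ?_
        intro e he
        rcases hformE e he with ⟨a, b, rfl⟩ | ⟨a, b, rfl⟩
        · rw [indv_vD]; have := hMv a b he; rw [if_neg (by omega)]
        · exact indv_hD
      · refine sum_map_zero ?_
        intro e he
        rcases hformE e he with ⟨a, b, rfl⟩ | ⟨a, b, rfl⟩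
        · rw [indv_vD]; have := hMv a b he; rw [if_neg (by omega)]
        · exact indv_hD
      · have hrow := piv_row C hformE q
        unfold piv
        rw [← hrow]
        apply sum_map_congr
        intro e he
        rcases hformE e he with ⟨a, b, rfl⟩ | ⟨a, b, rfl⟩
        · rw [indv_vD]
          have := hMv a b he
          have hiff : (∃ a', vD a b = vD a' q) ↔ b = q := by
            constructor
            · rintro ⟨a', hh⟩; exact (vD_inj.mp hh).2
            · rintro rfl; exact ⟨a, rfl⟩
          rw [if_congr hiff rfl rfl]
          split_ifs <;> first | rfl | omega
        · rw [indv_hD]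
          have hne : ¬(∃ a', hD a b = vD a' q) := by
            rintro ⟨a', hh⟩; exact vD_ne_hD hh.symm
          rw [if_neg hne]
    have hkeyH : ∀ p q : ℤ, pH p q ∈ X → piv C.edges p q = piv C.edges (p + 1) q := by
      intro p q hpq
      have hnotin : vD p q ∉ C.edges := fun hin => vD_mem_dual (hdualE _ hin) hpq
      rw [piv_step_h hformE p q]
      unfold cnt
      rw [cnt_zero hnotin, add_zero]
    have hkeyV : ∀ p q : ℤ, pV p q ∈ X → piv C.edges p q = piv C.edges p (q + 1) := by
      intro p q hpq
      have hnotin : hD p q ∉ C.edges := fun hin => hD_mem_dual (hdualE _ hin) hpq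
      have hv := piv_step_v C hformE p q
      unfold cnt at hv
      rw [cnt_zero hnotin, add_zero] at hv
      exact z2' _ _ hv
    have hstep : ∀ v w : V2, (graphOf X).Adj v w →
        piv C.edges v.1 v.2 = piv C.edges w.1 w.2 := by
      rintro ⟨v1, v2⟩ ⟨w1, w2⟩ hvw
      have hadj : latticeAdj (v1, v2) (w1, w2) := hvw.1
      have hmem : s(((v1, v2) : V2), ((w1, w2) : V2)) ∈ X := hvw.2
      have hcases : (w1 = v1 + 1 ∧ w2 = v2) ∨ (v1 = w1 + 1 ∧ v2 = w2) ∨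
          (w2 = v2 + 1 ∧ w1 = v1) ∨ (v2 = w2 + 1 ∧ v1 = w1) := by
        unfold latticeAdj dist1 at hadj
        simp only at hadj
        omega
      rcases hcases with ⟨h1, h2⟩ | ⟨h1, h2⟩ | ⟨h1, h2⟩ | ⟨h1, h2⟩
      · have he : s(((v1, v2) : V2), ((w1, w2) : V2)) = pH v1 v2 := by rw [h1, h2]; rfl
        simp only [h1, h2]
        exact hkeyH v1 v2 (he ▸ hmem)
      · have he : s(((v1, v2) : V2), ((w1, w2) : V2)) = pH w1 w2 := by
          rw [h1, h2]; exact Sym2.eq_swap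
        simp only [h1, h2]
        exact (hkeyH w1 w2 (he ▸ hmem)).symm
      · have he : s(((v1, v2) : V2), ((w1, w2) : V2)) = pV v1 v2 := by rw [h1, h2]; rfl
        simp only [h1, h2]
        exact hkeyV v1 v2 (he ▸ hmem)
      · have he : s(((v1, v2) : V2), ((w1, w2) : V2)) = pV w1 w2 := by
          rw [h1, h2]; exact Sym2.eq_swap
        simp only [h1, h2]
        exact (hkeyV w1 w2 (he ▸ hmem)).symm
    have hconst : ∀ v w : V2, (graphOf X).Reachable v w →
        piv C.edges v.1 v.2 = piv C.edges w.1 w.2 := by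
      intro v w hr
      obtain ⟨wk⟩ := hr
      induction wk with
      | nil => rfl
      | cons h p ih => exact (hstep _ _ h).trans ih
    have hinf := hX.2 (a0, b0)
    unfold compInfinite at hinf
    have hbox : {y : V2 | -M ≤ y.1 ∧ y.1 ≤ M ∧ -M ≤ y.2 ∧ y.2 ≤ M}.Finite := by
      apply Set.Finite.subset (Set.Finite.prod (Set.finite_Icc (-M) M) (Set.finite_Icc (-M) M))
      rintro ⟨y1, y2⟩ ⟨h1, h2, h3, h4⟩
      exact ⟨Set.mem_Icc.mpr ⟨h1, h2⟩, Set.mem_Icc.mpr ⟨h3, h4⟩⟩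
    obtain ⟨w, hwreach, hwout⟩ : ∃ w, (graphOf X).Reachable (a0, b0) w ∧
        ¬(-M ≤ w.1 ∧ w.1 ≤ M ∧ -M ≤ w.2 ∧ w.2 ≤ M) := by
      by_contra hcon
      push_neg at hcon
      exact hinf (hbox.subset (fun y hy => hcon y hy))
    have h0 : piv C.edges w.1 w.2 = 0 := hfar w.1 w.2 (by omega)
    have h1 : piv C.edges a0 b0 = piv C.edges w.1 w.2 := hconst (a0, b0) w hwreach
    rw [hpiv1, h0] at h1
    exact absurd h1 one_ne_zero
  · -- Case 2: all edges horizontal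
    push_neg at hvert
    have hallh : ∀ e ∈ C.edges, ∃ a b, e = hD a b := by
      intro e he
      rcases hformE e he with ⟨a, b, rfl⟩ | h
      · exact absurd he (hvert a b)
      · exact h
    have hsnd : ∀ v ∈ C.support, v.2 = u.2 := walk_snd_const C hallh
    have hene : C.edges ≠ [] := by
      intro hnil
      have h3 := hC.three_le_length
      have hle := C.length_edges
      rw [hnil] at hle
      simp at hle
      omega
    obtain ⟨m, hmmem, hmmax⟩ := list_max (C.support.map Prod.fst)
      (by simp [C.support_ne_nil])
    obtain ⟨vhat, hvhat, hvhat1⟩ := List.mem_map.mp hmmem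
    have hedgefacts : ∀ a b : ℤ, hD a b ∈ C.edges → b = u.2 ∧ a ≤ m := by
      intro a b he
      have hmem1 : s(((a - 1, b) : V2), ((a, b) : V2)) ∈ C.edges := he
      have hfst := C.fst_mem_support_of_mem_edges hmem1
      have hsnd' := C.snd_mem_support_of_mem_edges hmem1
      refine ⟨hsnd _ hsnd', ?_⟩
      have := hmmax _ (List.mem_map.mpr ⟨_, hsnd', rfl⟩)
      simpa using this
    have hedgeform : ∀ e ∈ C.edges, ((m, u.2) : V2) ∈ e → e = hD m u.2 := by
      intro e he hme
      obtain ⟨a, b, rfl⟩ := hallh e he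
      obtain ⟨hb, ha⟩ := hedgefacts a b he
      have hfst : s(((a - 1, b) : V2), ((a, b) : V2)) ∈ C.edges := he
      have ha1 : a - 1 ≤ m := by omega
      have hme' : ((m, u.2) : V2) = (a - 1, b) ∨ ((m, u.2) : V2) = (a, b) :=
        Sym2.mem_iff.mp hme
      rcases hme' with h1 | h1
      · exfalso
        rw [Prod.mk.injEq] at h1
        -- m = a - 1 and a ≤ m : but also (a, b) in support so a ≤ m; contradiction? No!
        -- m = a - 1 < a ≤ m
        omega
      · rw [Prod.mk.injEq] at h1
        exact hD_inj.mpr ⟨h1.1.symm, h1.2.symm⟩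
    have hmem' : ((m, u.2) : V2) ∈ C.support := by
      have h2 : vhat = ((m, u.2) : V2) := Prod.ext hvhat1 (hsnd _ hvhat)
      rwa [h2] at hvhat
    obtain ⟨e0, he0, hme0⟩ := exists_incident C _ hmem' hene
    have he0' : hD m u.2 ∈ C.edges := by
      have := hedgeform e0 he0 hme0
      rwa [this] at he0
    have hk := key (fun w => if w = ((m, u.2) : V2) then (1 : ZMod 2) else 0) C
    rw [z2] at hk
    have hpt : (C.edges.map (eSum (fun w => if w = ((m, u.2) : V2) then (1 : ZMod 2) else 0))).sum
        = (C.edges.map (ind1 (hD m u.2))).sum := by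
      apply sum_map_congr
      intro e he
      obtain ⟨a, b, rfl⟩ := hallh e he
      obtain ⟨hb, ha⟩ := hedgefacts a b he
      rw [ind1_hD_hD]
      have h1 : eSum (fun w => if w = ((m, u.2) : V2) then (1 : ZMod 2) else 0) (hD a b)
          = (if ((a - 1, b) : V2) = ((m, u.2) : V2) then (1 : ZMod 2) else 0)
            + (if ((a, b) : V2) = ((m, u.2) : V2) then 1 else 0) := rfl
      rw [h1]
      rw [if_neg (by intro hh; rw [Prod.mk.injEq] at hh; omega)]
      by_cases ham : a = m
      · rw [if_pos (by rw [ham, hb]), if_pos ⟨ham, hb⟩, zero_add]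
      · rw [if_neg (by intro hh; rw [Prod.mk.injEq] at hh; exact ham hh.1),
          if_neg (fun hh => ham hh.1), zero_add]
    rw [hpt, cnt_one he0' hnd] at hk
    exact absurd hk one_ne_zero

lemma dist1_le_walk_length {Z : Set (Sym2 V2)} :
    ∀ {u v : V2} (w : (graphOf Z).Walk u v), dist1 u v ≤ w.length := by
  intro u v w
  induction w with
  | nil => unfold dist1; omega
  | @cons u z v h w ih =>
    have h1 : dist1 u z = 1 := h.1
    unfold dist1 at *
    simp only [SimpleGraph.Walk.length_cons]
    omega

/-- The primal edge crossing a dual edge. -/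
def cross : Sym2 V2 → Sym2 V2 :=
  Sym2.lift ⟨fun u v => if u.1 = v.1 then s((u.1, max u.2 v.2), (u.1 + 1, max u.2 v.2))
      else s((max u.1 v.1, min u.2 v.2), (max u.1 v.1, min u.2 v.2 + 1)), by
    intro u v
    dsimp only
    by_cases h : u.1 = v.1
    · rw [if_pos h, if_pos h.symm, h, max_comm]
    · rw [if_neg h, if_neg (Ne.symm h), max_comm, min_comm]⟩

lemma cross_vD {a b : ℤ} : cross (vD a b) = pH a b := by
  have h1 : max (b - 1) b = b := max_eq_right (by omega)
  unfold cross vD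
  rw [Sym2.lift_mk]
  dsimp only
  rw [if_pos rfl, h1]
  rfl

lemma cross_hD {a b : ℤ} : cross (hD a b) = pV a b := by
  have h1 : max (a - 1) a = a := max_eq_right (by omega)
  have h2 : min b b = b := min_self b
  unfold cross hD
  rw [Sym2.lift_mk]
  dsimp only
  rw [if_neg (by omega), h1, h2]
  rfl

lemma cross_inj {e e' : Sym2 V2} (h : DualForm e) (h' : DualForm e')
    (hc : cross e = cross e') : e = e' := by
  rcases h with ⟨a, b, rfl⟩ | ⟨a, b, rfl⟩ <;> rcases h' with ⟨a', b', rfl⟩ | ⟨a', b', rfl⟩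
  · rw [cross_vD, cross_vD] at hc
    obtain ⟨rfl, rfl⟩ := pH_inj.mp hc; rfl
  · rw [cross_vD, cross_hD] at hc
    exact absurd hc pH_ne_pV
  · rw [cross_hD, cross_vD] at hc
    exact absurd hc.symm pH_ne_pV
  · rw [cross_hD, cross_hD] at hc
    obtain ⟨rfl, rfl⟩ := pV_inj.mp hc; rfl

lemma pH_lattice {a b : ℤ} : pH a b ∈ latticeEdges := by
  refine ⟨(a, b), (a + 1, b), ?_, rfl⟩
  unfold latticeAdj dist1
  simp only
  omega

lemma pV_lattice {a b : ℤ} : pV a b ∈ latticeEdges := by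
  refine ⟨(a, b), (a, b + 1), ?_, rfl⟩
  unfold latticeAdj dist1
  simp only
  omega

lemma graphOf_mono {Z Z' : Set (Sym2 V2)} (h : Z ⊆ Z') : graphOf Z ≤ graphOf Z' :=
  fun _ _ hadj => ⟨hadj.1, h hadj.2⟩

lemma dual_anti {Z Z' : Set (Sym2 V2)} (h : Z ⊆ Z') : dualConfig Z' ⊆ dualConfig Z := by
  rintro e ⟨a, b, ⟨h1, h2⟩ | ⟨h1, h2⟩⟩
  · exact ⟨a, b, Or.inl ⟨h1, fun hx => h2 (h hx)⟩⟩
  · exact ⟨a, b, Or.inr ⟨h1, fun hx => h2 (h hx)⟩⟩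


end Aux

/-- Let `X` be an everywhere percolating subgraph of `ℤ²`, `ε ∈ (0,1)`, and
let `Y = Y(X,ε)` be obtained from `X` by `ε`-Bernoulli addition.  Then for any two dual
vertices `x, y`, the probability that `x` and `y` are connected in the dual configuration `Y*`
is at most `(1-ε) ^ |x-y|₁`. -/
theorem dual_connection_probability_bound
    {Ω : Type} [MeasurableSpace Ω] (μ : Measure Ω) [IsProbabilityMeasure μ]
    (X : Set (Sym2 V2)) (hX : EverywherePercolating X)
    (ε : ℝ) (hε : ε ∈ Set.Ioo (0 : ℝ) 1)
    (B : Sym2 V2 → Ω → Bool) (hB : BernoulliFamily μ ε B)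
    (x y : V2) :
    μ {ω | (graphOf (dualConfig (addConfig X B ω))).Reachable x y}
      ≤ ENNReal.ofReal ((1 - ε) ^ dist1 x y) := by

  have hDsub : ∀ ω : Ω, ∀ e' ∈ (graphOf (dualConfig (addConfig X B ω))).edgeSet,
      e' ∈ (graphOf (dualConfig X)).edgeSet := by
    intro ω
    exact SimpleGraph.edgeSet_mono (graphOf_mono (dual_anti Set.subset_union_left))
  by_cases hreach : (graphOf (dualConfig X)).Reachable x y
  · obtain ⟨w0⟩ := hreach
    set p := w0.bypass with hpdef
    have hpath : p.IsPath := w0.bypass_isPath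
    have hpform : ∀ e ∈ p.edges, DualForm e :=
      fun e he => dual_form (graphOf_edge_mem (p.edges_subset_edgeSet he))
    have hndL : (p.edges.map cross).Nodup := by
      refine List.Nodup.map_on ?_ hpath.edges_nodup
      intro e he e' he' hcc
      exact cross_inj (hpform e he) (hpform e' he') hcc
    set S : Finset (Sym2 V2) := (p.edges.map cross).toFinset with hSdef
    have hcard : S.card = p.length := by
      rw [hSdef, List.toFinset_card_of_nodup hndL, List.length_map,
        SimpleGraph.Walk.length_edges]
    have hsub : {ω | (graphOf (dualConfig (addConfig X B ω))).Reachable x y}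
        ⊆ ⋂ c ∈ S, (B c) ⁻¹' {false} := by
      intro ω hω
      simp only [Set.mem_iInter, hSdef, List.mem_toFinset, List.mem_map]
      rintro c ⟨e, he, rfl⟩
      obtain ⟨wω⟩ := hω
      have hEsub : ∀ e' ∈ wω.edges, e' ∈ (graphOf (dualConfig X)).edgeSet :=
        fun e' he' => hDsub ω e' (wω.edges_subset_edgeSet he')
      have huniq := SimpleGraph.isAcyclic_iff_path_unique.mp (dual_acyclic hX)
      have hpq : (⟨p, hpath⟩ : (graphOf (dualConfig X)).Path x y)
          = ⟨(wω.transfer _ hEsub).bypass, (wω.transfer _ hEsub).bypass_isPath⟩ :=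
        huniq _ _
      have hpe : p.edges = (wω.transfer _ hEsub).bypass.edges :=
        congrArg (fun r : (graphOf (dualConfig X)).Path x y => r.1.edges) hpq
      have hq : e ∈ (wω.transfer _ hEsub).edges :=
        (wω.transfer _ hEsub).edges_bypass_subset (hpe ▸ he)
      rw [wω.edges_transfer hEsub] at hq
      have hin : e ∈ dualConfig (addConfig X B ω) :=
        graphOf_edge_mem (wω.edges_subset_edgeSet hq)
      simp only [Set.mem_preimage, Set.mem_singleton_iff]
      obtain ⟨a, b, hc⟩ := hin
      rcases hc with ⟨h1, h2⟩ | ⟨h1, h2⟩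
      · have h1' : e = vD a b := h1
        have hnt : B (pH a b) ω ≠ true := fun ht => h2 (Or.inr ⟨pH_lattice, ht⟩)
        rw [h1', cross_vD]
        cases hbc : B (pH a b) ω
        · rfl
        · exact absurd hbc hnt
      · have h1' : e = hD a b := h1
        have hnt : B (pV a b) ω ≠ true := fun ht => h2 (Or.inr ⟨pV_lattice, ht⟩)
        rw [h1', cross_hD]
        cases hbc : B (pV a b) ω
        · rfl
        · exact absurd hbc hnt
    have hone : ∀ c : Sym2 V2, μ ((B c) ⁻¹' {false}) = ENNReal.ofReal (1 - ε) := by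
      intro c
      have htrue : μ {ω | B c ω = true} = ENNReal.ofReal ε := hB.2.2 c
      have hmeast : MeasurableSet {ω | B c ω = true} := (hB.1 c) (measurableSet_singleton true)
      have hcompl : (B c) ⁻¹' {false} = {ω | B c ω = true}ᶜ := by
        ext ω
        simp [Set.mem_preimage]
      rw [hcompl, measure_compl hmeast (measure_ne_top μ _), htrue, measure_univ,
        ENNReal.ofReal_sub _ hε.1.le, ENNReal.ofReal_one]
    have hmeas : μ (⋂ c ∈ S, (B c) ⁻¹' {false}) = ∏ c ∈ S, μ ((B c) ⁻¹' {false}) :=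
      (iIndepFun_iff_measure_inter_preimage_eq_mul.mp hB.2.1) S
        (fun i _ => measurableSet_singleton false)
    have h1e : (0 : ℝ) ≤ 1 - ε := by linarith [hε.2]
    calc μ {ω | (graphOf (dualConfig (addConfig X B ω))).Reachable x y}
        ≤ μ (⋂ c ∈ S, (B c) ⁻¹' {false}) := measure_mono hsub
      _ = ∏ c ∈ S, μ ((B c) ⁻¹' {false}) := hmeas
      _ = ENNReal.ofReal (1 - ε) ^ S.card := by
          rw [Finset.prod_congr rfl (fun c _ => hone c), Finset.prod_const]
      _ = ENNReal.ofReal ((1 - ε) ^ S.card) := (ENNReal.ofReal_pow h1e _).symm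
      _ ≤ ENNReal.ofReal ((1 - ε) ^ dist1 x y) := by
          apply ENNReal.ofReal_le_ofReal
          apply pow_le_pow_of_le_one h1e (by linarith [hε.1])
          rw [hcard]
          exact dist1_le_walk_length p
  · have hempty : {ω | (graphOf (dualConfig (addConfig X B ω))).Reachable x y} = ∅ := by
      rw [Set.eq_empty_iff_forall_notMem]
      intro ω hω
      apply hreach
      obtain ⟨wω⟩ := hω
      exact ⟨wω.transfer _ (fun e' he' => hDsub ω e' (wω.edges_subset_edgeSet he'))⟩
    rw [hempty, measure_empty]
    exact zero_le
end
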